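/- Let a ≥ 1 be an integer. Then ∑_{i=1}^{a} C(a,i)·(1/√(2(a−i)+1) + 2/√i) ≤ 2^a · (4 + √2)·√2/√a · (1 + o(1)) as a → ∞; more precisely, the normalized quantity (1/(3(2^a − 1)))·√((2a+1)/3)·∑_{i=1}^{a} C(a,i)[1/√(2(a−i)+1) + 2/√i] converges to (4+√2)/(3√3) as a → ∞. -/

import Mathlib

open Filter Finset Real

lemma moment (a : ℕ) : ∑ i ∈ range (a+1), (a.choose i : ℝ) * (2*(i:ℝ) - a)^2 = (a : ℝ) * 2^a := by
  induction a with
  | zero => simp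
  | succ n ih =>
    have h := Finset.sum_choose_succ_mul (fun i _ => (2*(i:ℝ) - ((n+1:ℕ):ℝ))^2) n
    rw [show n+1+1 = n+2 from rfl, h]
    have : ∀ i ∈ range (n+1), (n.choose i : ℝ) * (2*(i:ℝ) - ((n+1:ℕ):ℝ))^2
        + (n.choose i : ℝ) * (2*(((i+1):ℕ):ℝ) - ((n+1:ℕ):ℝ))^2
        = 2 * ((n.choose i : ℝ) * (2*(i:ℝ) - n)^2) + 2 * (n.choose i : ℝ) := by
      intro i _; push_cast; ring
    rw [← Finset.sum_add_distrib, Finset.sum_congr rfl this, Finset.sum_add_distrib,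
      ← Finset.mul_sum, ← Finset.mul_sum, ih, ← Nat.cast_sum, Nat.sum_range_choose]
    push_cast; ring



lemma tail_bound (a : ℕ) {t : ℝ} (ht : 0 < t) :
    ∑ i ∈ (range (a+1)).filter (fun i : ℕ => t ≤ |2*(i:ℝ) - a|), (a.choose i : ℝ)
      ≤ (a:ℝ) * 2^a / t^2 := by
  have h1 : ∑ i ∈ (range (a+1)).filter (fun i : ℕ => t ≤ |2*(i:ℝ) - a|), (a.choose i : ℝ)
      ≤ ∑ i ∈ (range (a+1)).filter (fun i : ℕ => t ≤ |2*(i:ℝ) - a|),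
        (a.choose i : ℝ) * (2*(i:ℝ) - a)^2 / t^2 := by
    apply Finset.sum_le_sum
    intro i hi
    simp only [Finset.mem_filter] at hi
    have h2 : t^2 ≤ (2*(i:ℝ) - a)^2 := by
      calc t^2 ≤ |2*(i:ℝ) - a|^2 := by
            apply pow_le_pow_left₀ ht.le hi.2
        _ = (2*(i:ℝ) - a)^2 := sq_abs _
    rw [le_div_iff₀ (by positivity)]
    calc (a.choose i : ℝ) * t^2 ≤ (a.choose i : ℝ) * (2*(i:ℝ) - a)^2 :=
          mul_le_mul_of_nonneg_left h2 (by positivity)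
      _ = _ := by ring
  refine h1.trans ?_
  rw [← moment a, ← Finset.sum_div]
  apply div_le_div_of_nonneg_right ?_ (by positivity)
  exact Finset.sum_le_sum_of_subset_of_nonneg (Finset.filter_subset _ _)
    (fun i _ _ => by positivity)


noncomputable def tt (a : ℕ) : ℝ := (a:ℝ) ^ ((9:ℝ)/10)




lemma tt_pos {a : ℕ} (ha : 1 ≤ a) : 0 < tt a := by
  apply Real.rpow_pos_of_pos; exact_mod_cast ha

lemma tt_le {a : ℕ} (ha : 1 ≤ a) : tt a ≤ (a : ℝ) := by
  have h1 : (1:ℝ) ≤ (a:ℝ) := by exact_mod_cast ha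
  calc tt a ≤ (a:ℝ) ^ (1:ℝ) := Real.rpow_le_rpow_of_exponent_le h1 (by norm_num)
    _ = a := Real.rpow_one _

lemma tt_lt {a : ℕ} (ha : 2 ≤ a) : tt a < (a : ℝ) := by
  have h1 : (1:ℝ) < (a:ℝ) := by exact_mod_cast ha
  calc tt a < (a:ℝ) ^ (1:ℝ) := Real.rpow_lt_rpow_of_exponent_lt h1 (by norm_num)
    _ = a := Real.rpow_one _

lemma S_upper {a : ℕ} (ha : 2 ≤ a) :
    ∑ i ∈ Finset.Icc 1 a, (a.choose i : ℝ) *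
        (1 / Real.sqrt (2 * ((a : ℝ) - i) + 1) + 2 / Real.sqrt i)
      ≤ (1 + 2*Real.sqrt 2)/Real.sqrt ((a:ℝ) - tt a) * 2^a
        + 3 * ((a:ℝ) * 2^a / (tt a)^2) := by
  have ht := tt_pos (by omega : 1 ≤ a)
  have hat : 0 < (a:ℝ) - tt a := by linarith [tt_lt ha]
  rw [← Finset.sum_filter_add_sum_filter_not (Finset.Icc 1 a)
    (fun i : ℕ => |2*(i:ℝ) - a| < tt a)]
  gcongr ?_ + ?_
  · -- bulk part
    calc ∑ i ∈ (Finset.Icc 1 a).filter (fun i : ℕ => |2*(i:ℝ) - a| < tt a),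
          (a.choose i : ℝ) * (1 / Real.sqrt (2 * ((a : ℝ) - i) + 1) + 2 / Real.sqrt i)
        ≤ ∑ i ∈ (Finset.Icc 1 a).filter (fun i : ℕ => |2*(i:ℝ) - a| < tt a),
          (a.choose i : ℝ) * ((1 + 2*Real.sqrt 2)/Real.sqrt ((a:ℝ) - tt a)) := by
          apply Finset.sum_le_sum
          intro i hi
          simp only [Finset.mem_filter, Finset.mem_Icc, abs_lt] at hi
          obtain ⟨⟨hi1, hi2⟩, hb1, hb2⟩ := hi
          apply mul_le_mul_of_nonneg_left ?_ (by positivity)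
          have key1 : (1:ℝ) / Real.sqrt (2 * ((a : ℝ) - i) + 1)
              ≤ 1 / Real.sqrt ((a:ℝ) - tt a) := by
            apply one_div_le_one_div_of_le (Real.sqrt_pos.2 hat)
            apply Real.sqrt_le_sqrt; linarith
          have key2 : (2:ℝ) / Real.sqrt i ≤ 2*Real.sqrt 2 / Real.sqrt ((a:ℝ) - tt a) := by
            rw [div_le_div_iff₀ (Real.sqrt_pos.2 (by exact_mod_cast hi1)) (Real.sqrt_pos.2 hat)]
            have : Real.sqrt ((a:ℝ) - tt a) ≤ Real.sqrt 2 * Real.sqrt i := by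
              rw [← Real.sqrt_mul (by norm_num)]
              apply Real.sqrt_le_sqrt; linarith
            calc 2 * Real.sqrt ((a:ℝ) - tt a) ≤ 2 * (Real.sqrt 2 * Real.sqrt i) := by linarith
              _ = 2 * Real.sqrt 2 * Real.sqrt i := by ring
          calc _ ≤ 1 / Real.sqrt ((a:ℝ) - tt a) + 2*Real.sqrt 2 / Real.sqrt ((a:ℝ) - tt a) :=
                add_le_add key1 key2
            _ = (1 + 2*Real.sqrt 2)/Real.sqrt ((a:ℝ) - tt a) := by ring
      _ = ((1 + 2*Real.sqrt 2)/Real.sqrt ((a:ℝ) - tt a)) *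
          ∑ i ∈ (Finset.Icc 1 a).filter (fun i : ℕ => |2*(i:ℝ) - a| < tt a),
            (a.choose i : ℝ) := by rw [Finset.mul_sum]; apply Finset.sum_congr rfl
                                   intros; ring
      _ ≤ ((1 + 2*Real.sqrt 2)/Real.sqrt ((a:ℝ) - tt a)) * 2^a := by
          apply mul_le_mul_of_nonneg_left ?_ (by positivity)
          calc ∑ i ∈ (Finset.Icc 1 a).filter (fun i : ℕ => |2*(i:ℝ) - a| < tt a),
                (a.choose i : ℝ)
              ≤ ∑ i ∈ range (a+1), (a.choose i : ℝ) := by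
                apply Finset.sum_le_sum_of_subset_of_nonneg
                · intro i hi
                  simp only [Finset.mem_filter, Finset.mem_Icc] at hi
                  simp only [Finset.mem_range]; omega
                · intros; positivity
            _ = 2^a := by rw [← Nat.cast_sum, Nat.sum_range_choose]; push_cast; ring
      _ = (1 + 2*Real.sqrt 2)/Real.sqrt ((a:ℝ) - tt a) * 2^a := rfl
  · -- tail part
    calc ∑ i ∈ (Finset.Icc 1 a).filter (fun i : ℕ => ¬(|2*(i:ℝ) - a| < tt a)),
          (a.choose i : ℝ) * (1 / Real.sqrt (2 * ((a : ℝ) - i) + 1) + 2 / Real.sqrt i)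
        ≤ ∑ i ∈ (Finset.Icc 1 a).filter (fun i : ℕ => ¬(|2*(i:ℝ) - a| < tt a)),
          (a.choose i : ℝ) * 3 := by
          apply Finset.sum_le_sum
          intro i hi
          simp only [Finset.mem_filter, Finset.mem_Icc] at hi
          obtain ⟨⟨hi1, hi2⟩, _⟩ := hi
          apply mul_le_mul_of_nonneg_left ?_ (by positivity)
          have hia : (i:ℝ) ≤ a := by exact_mod_cast hi2
          have s1 : (1:ℝ) ≤ Real.sqrt (2 * ((a : ℝ) - i) + 1) := by
            have := Real.sqrt_le_sqrt (show (1:ℝ) ≤ 2*((a:ℝ)-i)+1 by linarith)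
            simpa using this
          have s2 : (1:ℝ) ≤ Real.sqrt i := by
            have := Real.sqrt_le_sqrt (show (1:ℝ) ≤ (i:ℝ) by exact_mod_cast hi1)
            simpa using this
          have k1 : (1:ℝ) / Real.sqrt (2 * ((a : ℝ) - i) + 1) ≤ 1 := by
            rw [div_le_one (by linarith)]; exact s1
          have k2 : (2:ℝ) / Real.sqrt i ≤ 2 := by
            rw [div_le_iff₀ (by linarith)]; linarith
          linarith
      _ = 3 * ∑ i ∈ (Finset.Icc 1 a).filter (fun i : ℕ => ¬(|2*(i:ℝ) - a| < tt a)),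
            (a.choose i : ℝ) := by rw [Finset.mul_sum]; apply Finset.sum_congr rfl
                                   intros; ring
      _ ≤ 3 * ((a:ℝ) * 2^a / (tt a)^2) := by
          apply mul_le_mul_of_nonneg_left ?_ (by norm_num)
          refine le_trans ?_ (tail_bound a ht)
          apply Finset.sum_le_sum_of_subset_of_nonneg
          · intro i hi
            simp only [Finset.mem_filter, Finset.mem_Icc, not_lt] at hi
            simp only [Finset.mem_filter, Finset.mem_range]
            exact ⟨by omega, hi.2⟩
          · intros; positivity




lemma S_lower {a : ℕ} (ha : 2 ≤ a) :
    (1 + 2*Real.sqrt 2)/Real.sqrt ((a:ℝ) + tt a + 1) * (2^a - (a:ℝ) * 2^a / (tt a)^2)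
      ≤ ∑ i ∈ Finset.Icc 1 a, (a.choose i : ℝ) *
        (1 / Real.sqrt (2 * ((a : ℝ) - i) + 1) + 2 / Real.sqrt i) := by
  have ht := tt_pos (by omega : 1 ≤ a)
  have hta : (0:ℝ) < (a:ℝ) + tt a + 1 := by positivity
  set l : ℝ := (1 + 2*Real.sqrt 2)/Real.sqrt ((a:ℝ) + tt a + 1) with hl
  have hl0 : 0 ≤ l := by positivity
  -- bulk sum over Icc equals bulk sum over range (a+1)
  have hsets : (Finset.Icc 1 a).filter (fun i : ℕ => |2*(i:ℝ) - a| < tt a)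
      = (range (a+1)).filter (fun i : ℕ => |2*(i:ℝ) - a| < tt a) := by
    ext i
    simp only [Finset.mem_filter, Finset.mem_Icc, Finset.mem_range]
    constructor
    · rintro ⟨⟨h1, h2⟩, h3⟩; exact ⟨by omega, h3⟩
    · rintro ⟨h1, h3⟩
      refine ⟨⟨?_, by omega⟩, h3⟩
      by_contra h
      have hi0 : i = 0 := by omega
      subst hi0
      simp only [Nat.cast_zero, mul_zero, zero_sub, abs_neg, Nat.abs_cast] at h3
      linarith [tt_le (by omega : 1 ≤ a)]
  -- the bulk mass is large
  have hmass : (2:ℝ)^a - (a:ℝ) * 2^a / (tt a)^2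
      ≤ ∑ i ∈ (Finset.Icc 1 a).filter (fun i : ℕ => |2*(i:ℝ) - a| < tt a),
          (a.choose i : ℝ) := by
    rw [hsets]
    have hsplit := Finset.sum_filter_add_sum_filter_not (range (a+1))
      (fun i : ℕ => |2*(i:ℝ) - a| < tt a) (fun i => (a.choose i : ℝ))
    have htot : ∑ i ∈ range (a+1), (a.choose i : ℝ) = 2^a := by
      rw [← Nat.cast_sum, Nat.sum_range_choose]; push_cast; ring
    have htail : ∑ i ∈ (range (a+1)).filter (fun i : ℕ => ¬(|2*(i:ℝ) - a| < tt a)),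
        (a.choose i : ℝ) ≤ (a:ℝ) * 2^a / (tt a)^2 := by
      refine le_trans (le_of_eq ?_) (tail_bound a ht)
      apply Finset.sum_congr ?_ (fun _ _ => rfl)
      apply Finset.filter_congr
      intro i _
      simp [not_lt]
    linarith
  calc l * (2^a - (a:ℝ) * 2^a / (tt a)^2)
      ≤ l * ∑ i ∈ (Finset.Icc 1 a).filter (fun i : ℕ => |2*(i:ℝ) - a| < tt a),
          (a.choose i : ℝ) := mul_le_mul_of_nonneg_left hmass hl0
    _ = ∑ i ∈ (Finset.Icc 1 a).filter (fun i : ℕ => |2*(i:ℝ) - a| < tt a),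
          (a.choose i : ℝ) * l := by rw [Finset.mul_sum]; exact Finset.sum_congr rfl
                                      (fun _ _ => by ring)
    _ ≤ ∑ i ∈ (Finset.Icc 1 a).filter (fun i : ℕ => |2*(i:ℝ) - a| < tt a),
          (a.choose i : ℝ) * (1 / Real.sqrt (2 * ((a : ℝ) - i) + 1) + 2 / Real.sqrt i) := by
        apply Finset.sum_le_sum
        intro i hi
        simp only [Finset.mem_filter, Finset.mem_Icc, abs_lt] at hi
        obtain ⟨⟨hi1, hi2⟩, hb1, hb2⟩ := hi
        apply mul_le_mul_of_nonneg_left ?_ (by positivity)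
        have harg : (0:ℝ) < 2 * ((a:ℝ) - i) + 1 := by
          have : (i:ℝ) ≤ a := by exact_mod_cast hi2
          linarith
        have key1 : (1:ℝ) / Real.sqrt ((a:ℝ) + tt a + 1)
            ≤ 1 / Real.sqrt (2 * ((a : ℝ) - i) + 1) := by
          apply one_div_le_one_div_of_le (Real.sqrt_pos.2 harg)
          apply Real.sqrt_le_sqrt; linarith
        have key2 : 2*Real.sqrt 2 / Real.sqrt ((a:ℝ) + tt a + 1) ≤ (2:ℝ) / Real.sqrt i := by
          rw [div_le_div_iff₀ (Real.sqrt_pos.2 hta) (Real.sqrt_pos.2 (by exact_mod_cast hi1))]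
          have h2i : Real.sqrt 2 * Real.sqrt i ≤ Real.sqrt ((a:ℝ) + tt a + 1) := by
            rw [← Real.sqrt_mul (by norm_num)]
            apply Real.sqrt_le_sqrt; linarith
          calc 2 * Real.sqrt 2 * Real.sqrt i = 2 * (Real.sqrt 2 * Real.sqrt i) := by ring
            _ ≤ 2 * Real.sqrt ((a:ℝ) + tt a + 1) := by linarith
        calc l = 1 / Real.sqrt ((a:ℝ) + tt a + 1)
              + 2*Real.sqrt 2 / Real.sqrt ((a:ℝ) + tt a + 1) := by rw [hl]; ring
          _ ≤ _ := add_le_add key1 key2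
    _ ≤ ∑ i ∈ Finset.Icc 1 a, (a.choose i : ℝ) *
          (1 / Real.sqrt (2 * ((a : ℝ) - i) + 1) + 2 / Real.sqrt i) := by
        apply Finset.sum_le_sum_of_subset_of_nonneg (Finset.filter_subset _ _)
        intro i hi _
        simp only [Finset.mem_Icc] at hi
        positivity



lemma lim_nat_rpow_neg {c : ℝ} (hc : 0 < c) :
    Tendsto (fun a : ℕ => (a:ℝ) ^ (-c)) atTop (nhds 0) :=
  (tendsto_rpow_neg_atTop hc).comp tendsto_natCast_atTop_atTop

lemma lim_tt_div : Tendsto (fun a : ℕ => tt a / a) atTop (nhds 0) := by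
  apply (lim_nat_rpow_neg (by norm_num : (0:ℝ) < 1/10)).congr'
  filter_upwards [eventually_ge_atTop 1] with a ha
  have hpos : (0:ℝ) < a := by exact_mod_cast ha
  rw [show -(1/10 : ℝ) = 9/10 - 1 by norm_num, Real.rpow_sub hpos, Real.rpow_one, tt]

lemma a_div_tt_sq_eq {a : ℕ} (ha : 1 ≤ a) : (a:ℝ) / (tt a)^2 = (a:ℝ) ^ (-(4/5):ℝ) := by
  have hpos : (0:ℝ) < a := by exact_mod_cast ha
  have h2 : (tt a)^2 = (a:ℝ) ^ ((9:ℝ)/5) := by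
    rw [tt, ← Real.rpow_natCast ((a:ℝ) ^ ((9:ℝ)/10)) 2, ← Real.rpow_mul hpos.le]
    norm_num
  rw [h2, show (-(4/5) : ℝ) = 1 - 9/5 by norm_num, Real.rpow_sub hpos, Real.rpow_one]

lemma lim_a_div_tt_sq : Tendsto (fun a : ℕ => (a:ℝ) / (tt a)^2) atTop (nhds 0) := by
  apply (lim_nat_rpow_neg (by norm_num : (0:ℝ) < 4/5)).congr'
  filter_upwards [eventually_ge_atTop 1] with a ha
  rw [a_div_tt_sq_eq ha]

lemma lim_r : Tendsto (fun a : ℕ => (2:ℝ)^a / ((2:ℝ)^a - 1)) atTop (nhds 1) := by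
  have h1 : Tendsto (fun a : ℕ => (2:ℝ)^a - 1) atTop atTop :=
    tendsto_atTop_add_const_right _ _ (tendsto_pow_atTop_atTop_of_one_lt (by norm_num))
  have h2 : Tendsto (fun a : ℕ => ((2:ℝ)^a - 1)⁻¹) atTop (nhds 0) :=
    h1.inv_tendsto_atTop
  have h3 : Tendsto (fun a : ℕ => 1 + ((2:ℝ)^a - 1)⁻¹) atTop (nhds 1) := by
    simpa using tendsto_const_nhds.add h2
  apply h3.congr'
  filter_upwards [eventually_ge_atTop 1] with a ha
  have hne : (2:ℝ)^a - 1 ≠ 0 := by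
    have : (2:ℝ) ≤ 2^a := by
      calc (2:ℝ) = 2^1 := (pow_one 2).symm
      _ ≤ 2^a := pow_le_pow_right₀ (by norm_num) ha
    linarith
  field_simp
  ring

lemma lim_inv_a : Tendsto (fun a : ℕ => 1/(a:ℝ)) atTop (nhds 0) :=
  tendsto_one_div_atTop_nhds_zero_nat

lemma lim_sqrt_minus :
    Tendsto (fun a : ℕ => Real.sqrt ((2*(a:ℝ)+1)/(3*((a:ℝ) - tt a)))) atTop
      (nhds (Real.sqrt (2/3))) := by
  apply (Real.continuous_sqrt.tendsto (2/3)).comp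
  have h : Tendsto (fun a : ℕ => (2 + 1/(a:ℝ))/(3*(1 - tt a/a))) atTop (nhds (2/3)) := by
    have hnum : Tendsto (fun a : ℕ => 2 + 1/(a:ℝ)) atTop (nhds 2) := by
      simpa using tendsto_const_nhds.add lim_inv_a
    have hden : Tendsto (fun a : ℕ => 3*(1 - tt a/(a:ℝ))) atTop (nhds 3) := by
      have : Tendsto (fun a : ℕ => 1 - tt a/(a:ℝ)) atTop (nhds 1) := by
        simpa using tendsto_const_nhds.sub lim_tt_div
      simpa using tendsto_const_nhds.mul this
    exact hnum.div hden (by norm_num)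
  apply h.congr'
  filter_upwards [eventually_ge_atTop 2] with a ha
  have hpos : (0:ℝ) < a := by exact_mod_cast (by omega : 0 < a)
  have hat : (0:ℝ) < (a:ℝ) - tt a := by linarith [tt_lt ha]
  field_simp

lemma lim_sqrt_plus :
    Tendsto (fun a : ℕ => Real.sqrt ((2*(a:ℝ)+1)/(3*((a:ℝ) + tt a + 1)))) atTop
      (nhds (Real.sqrt (2/3))) := by
  apply (Real.continuous_sqrt.tendsto (2/3)).comp
  have h : Tendsto (fun a : ℕ => (2 + 1/(a:ℝ))/(3*(1 + tt a/a + 1/a))) atTop (nhds (2/3)) := by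
    have hnum : Tendsto (fun a : ℕ => 2 + 1/(a:ℝ)) atTop (nhds 2) := by
      simpa using tendsto_const_nhds.add lim_inv_a
    have hden : Tendsto (fun a : ℕ => 3*(1 + tt a/(a:ℝ) + 1/a)) atTop (nhds 3) := by
      have : Tendsto (fun a : ℕ => 1 + tt a/(a:ℝ) + 1/a) atTop (nhds 1) := by
        simpa using (tendsto_const_nhds.add lim_tt_div).add lim_inv_a
      simpa using tendsto_const_nhds.mul this
    exact hnum.div hden (by norm_num)
  apply h.congr'
  filter_upwards [eventually_ge_atTop 2] with a ha
  have hpos : (0:ℝ) < a := by exact_mod_cast (by omega : 0 < a)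
  have hat : (0:ℝ) < (a:ℝ) + tt a + 1 := by
    have := tt_pos (by omega : 1 ≤ a); linarith
  field_simp

lemma lim_w : Tendsto (fun a : ℕ => Real.sqrt ((2*(a:ℝ)+1)/3) * ((a:ℝ)/(tt a)^2))
    atTop (nhds 0) := by
  apply tendsto_of_tendsto_of_tendsto_of_le_of_le' tendsto_const_nhds
    (lim_nat_rpow_neg (by norm_num : (0:ℝ) < 3/10))
  · filter_upwards [eventually_ge_atTop 1] with a ha
    have := tt_pos ha
    positivity
  · filter_upwards [eventually_ge_atTop 1] with a ha
    have hpos : (0:ℝ) < a := by exact_mod_cast ha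
    have ha1 : (1:ℝ) ≤ a := by exact_mod_cast ha
    have h1 : Real.sqrt ((2*(a:ℝ)+1)/3) ≤ (a:ℝ) ^ ((1:ℝ)/2) := by
      rw [← Real.sqrt_eq_rpow]
      apply Real.sqrt_le_sqrt
      linarith
    have h2 : (a:ℝ)/(tt a)^2 = (a:ℝ) ^ (-(4/5):ℝ) := a_div_tt_sq_eq ha
    calc Real.sqrt ((2*(a:ℝ)+1)/3) * ((a:ℝ)/(tt a)^2)
        ≤ (a:ℝ) ^ ((1:ℝ)/2) * (a:ℝ) ^ (-(4/5):ℝ) := by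
          rw [h2]
          apply mul_le_mul_of_nonneg_right h1 (Real.rpow_nonneg hpos.le _)
      _ = (a:ℝ) ^ (-(3/10):ℝ) := by
          rw [← Real.rpow_add hpos]; norm_num



noncomputable def pref (a : ℕ) : ℝ := 1 / (3 * ((2 : ℝ) ^ a - 1)) * Real.sqrt ((2 * a + 1) / 3)

lemma K_eq : (1 + 2*Real.sqrt 2)/3 * Real.sqrt (2/3) = (4 + Real.sqrt 2)/(3*Real.sqrt 3) := by
  have h2 : Real.sqrt 2 * Real.sqrt 2 = 2 := Real.mul_self_sqrt (by norm_num)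
  have h3 : (0:ℝ) < Real.sqrt 3 := Real.sqrt_pos.2 (by norm_num)
  rw [Real.sqrt_div (by norm_num : (0:ℝ) ≤ 2)]
  field_simp
  nlinarith [h2, h3]

lemma twopow_ne {a : ℕ} (ha : 1 ≤ a) : (2:ℝ)^a - 1 ≠ 0 := by
  have : (2:ℝ) ≤ 2^a := by
    calc (2:ℝ) = 2^1 := (pow_one 2).symm
    _ ≤ 2^a := pow_le_pow_right₀ (by norm_num) ha
  linarith

lemma lim_UB : Tendsto (fun a : ℕ => pref a *
    ((1 + 2*Real.sqrt 2)/Real.sqrt ((a:ℝ) - tt a) * 2^a + 3 * ((a:ℝ) * 2^a / (tt a)^2)))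
    atTop (nhds ((4 + Real.sqrt 2)/(3*Real.sqrt 3))) := by
  have h1 : Tendsto (fun a : ℕ => ((2:ℝ)^a / ((2:ℝ)^a - 1)) *
      ((1 + 2*Real.sqrt 2)/3 * Real.sqrt ((2*(a:ℝ)+1)/(3*((a:ℝ) - tt a))))
      + ((2:ℝ)^a / ((2:ℝ)^a - 1)) * (Real.sqrt ((2*(a:ℝ)+1)/3) * ((a:ℝ)/(tt a)^2)))
      atTop (nhds ((4 + Real.sqrt 2)/(3*Real.sqrt 3))) := by
    have hA := lim_r.mul ((tendsto_const_nhds : Tendsto (fun _ : ℕ => (1+2*Real.sqrt 2)/3) atTop (nhds ((1+2*Real.sqrt 2)/3))).mul lim_sqrt_minus)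
    have hB := lim_r.mul lim_w
    have := hA.add hB
    simp only [one_mul, mul_zero, add_zero] at this
    rwa [K_eq] at this
  apply h1.congr'
  filter_upwards [eventually_ge_atTop 2] with a ha
  have h2 := twopow_ne (by omega : 1 ≤ a)
  have hts := tt_pos (by omega : 1 ≤ a)
  have hat : (0:ℝ) < (a:ℝ) - tt a := by linarith [tt_lt ha]
  have hsq : Real.sqrt ((2*(a:ℝ)+1)/(3*((a:ℝ) - tt a)))
      = Real.sqrt ((2*(a:ℝ)+1)/3) / Real.sqrt ((a:ℝ) - tt a) := by
    rw [← Real.sqrt_div (by positivity), div_div]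
  rw [hsq, pref]
  have hsa : Real.sqrt ((a:ℝ) - tt a) ≠ 0 := (Real.sqrt_pos.2 hat).ne'
  have htt : (tt a : ℝ) ≠ 0 := hts.ne'
  field_simp

lemma lim_LB : Tendsto (fun a : ℕ => pref a *
    ((1 + 2*Real.sqrt 2)/Real.sqrt ((a:ℝ) + tt a + 1) * (2^a - (a:ℝ) * 2^a / (tt a)^2)))
    atTop (nhds ((4 + Real.sqrt 2)/(3*Real.sqrt 3))) := by
  have h1 : Tendsto (fun a : ℕ => (((2:ℝ)^a / ((2:ℝ)^a - 1)) *
      ((1 + 2*Real.sqrt 2)/3 * Real.sqrt ((2*(a:ℝ)+1)/(3*((a:ℝ) + tt a + 1)))))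
      * (1 - (a:ℝ)/(tt a)^2))
      atTop (nhds ((4 + Real.sqrt 2)/(3*Real.sqrt 3))) := by
    have hA := lim_r.mul ((tendsto_const_nhds : Tendsto (fun _ : ℕ => (1+2*Real.sqrt 2)/3) atTop (nhds ((1+2*Real.sqrt 2)/3))).mul lim_sqrt_plus)
    have hB : Tendsto (fun a : ℕ => 1 - (a:ℝ)/(tt a)^2) atTop (nhds 1) := by
      simpa using tendsto_const_nhds.sub lim_a_div_tt_sq
    have := hA.mul hB
    simp only [one_mul, mul_one] at this
    rwa [K_eq] at this
  apply h1.congr'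
  filter_upwards [eventually_ge_atTop 2] with a ha
  have h2 := twopow_ne (by omega : 1 ≤ a)
  have hts := tt_pos (by omega : 1 ≤ a)
  have hat : (0:ℝ) < (a:ℝ) + tt a + 1 := by positivity
  have hsq : Real.sqrt ((2*(a:ℝ)+1)/(3*((a:ℝ) + tt a + 1)))
      = Real.sqrt ((2*(a:ℝ)+1)/3) / Real.sqrt ((a:ℝ) + tt a + 1) := by
    rw [← Real.sqrt_div (by positivity), div_div]
  rw [hsq, pref]
  have hsa : Real.sqrt ((a:ℝ) + tt a + 1) ≠ 0 := (Real.sqrt_pos.2 hat).ne'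
  have htt : (tt a : ℝ) ≠ 0 := hts.ne'
  field_simp


theorem stmt_14 :
    Tendsto (fun a : ℕ =>
        (1 / (3 * ((2 : ℝ) ^ a - 1))) * Real.sqrt ((2 * a + 1) / 3) *
          ∑ i ∈ Finset.Icc 1 a, (a.choose i : ℝ) *
            (1 / Real.sqrt (2 * ((a : ℝ) - i) + 1) + 2 / Real.sqrt i))
      atTop (nhds ((4 + Real.sqrt 2) / (3 * Real.sqrt 3))) := by
  apply tendsto_of_tendsto_of_tendsto_of_le_of_le' lim_LB lim_UB
  · filter_upwards [eventually_ge_atTop 2] with a ha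
    have h2 := twopow_ne (by omega : 1 ≤ a)
    have h2' : (0:ℝ) < 2^a - 1 := by
      have : (2:ℝ) ≤ 2^a := by
        calc (2:ℝ) = 2^1 := (pow_one 2).symm
        _ ≤ 2^a := pow_le_pow_right₀ (by norm_num) (by omega)
      linarith
    have hp : 0 ≤ pref a := by rw [pref]; positivity
    calc pref a * ((1 + 2*Real.sqrt 2)/Real.sqrt ((a:ℝ) + tt a + 1)
          * (2^a - (a:ℝ) * 2^a / (tt a)^2))
        ≤ pref a * ∑ i ∈ Finset.Icc 1 a, (a.choose i : ℝ) *
            (1 / Real.sqrt (2 * ((a : ℝ) - i) + 1) + 2 / Real.sqrt i) :=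
          mul_le_mul_of_nonneg_left (S_lower ha) hp
      _ = _ := by rw [pref]
  · filter_upwards [eventually_ge_atTop 2] with a ha
    have h2' : (0:ℝ) < 2^a - 1 := by
      have : (2:ℝ) ≤ 2^a := by
        calc (2:ℝ) = 2^1 := (pow_one 2).symm
        _ ≤ 2^a := pow_le_pow_right₀ (by norm_num) (by omega)
      linarith
    have hp : 0 ≤ pref a := by rw [pref]; positivity
    calc (1 / (3 * ((2 : ℝ) ^ a - 1))) * Real.sqrt ((2 * a + 1) / 3) *
          ∑ i ∈ Finset.Icc 1 a, (a.choose i : ℝ) *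
            (1 / Real.sqrt (2 * ((a : ℝ) - i) + 1) + 2 / Real.sqrt i)
        = pref a * ∑ i ∈ Finset.Icc 1 a, (a.choose i : ℝ) *
            (1 / Real.sqrt (2 * ((a : ℝ) - i) + 1) + 2 / Real.sqrt i) := by rw [pref]
      _ ≤ pref a * ((1 + 2*Real.sqrt 2)/Real.sqrt ((a:ℝ) - tt a) * 2^a
            + 3 * ((a:ℝ) * 2^a / (tt a)^2)) :=
          mul_le_mul_of_nonneg_left (S_upper ha) hp
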